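/- arXiv:2404.00631 — 3 statements merged into one kernel-verified Lean document; each statement's English description precedes it below -/
import Mathlib

section
/- Let (Ω, ℙ) be a probability space, K, J positive integers, η > 0 and σ² > 0 real numbers. Let e_1, …, e_K : Ω → ℂ be square-integrable random variables and c_1, …, c_J ∈ ℂ constants. Let s_1, …, s_K, u_1, …, u_J : Ω → ℂ be mutually independent random variables, independent of (e_1, …, e_K), with zero mean and E[|s_i|²] = E[|u_j|²] = 1. Assume the random variable ω ↦ log(1 + η/(|∑_i e_i(ω) s_i(ω)|² + |∑_j c_j u_j(ω)|² + σ²)) is integrable. Then E[log₂(1 + η/(|∑_{i=1}^K e_i s_i|² + |∑_{j=1}^J c_j u_j|² + σ²))] ≥ log₂(1 + η/(∑_{i=1}^K E[|e_i|²] + ∑_{j=1}^J |c_j|² + σ²)). -/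
open MeasureTheory ProbabilityTheory
open ComplexConjugate

lemma aux_convex {η σ2 : ℝ} (hη : 0 < η) (hσ2 : 0 < σ2) :
    ConvexOn ℝ (Set.Ici 0) (fun x => Real.log (1 + η / (x + σ2))) := by
  set A := σ2 + η with hA
  have hApos : 0 < A := by positivity
  set f : ℝ → ℝ := fun x => Real.log (x + A) - Real.log (x + σ2) with hf
  have key : ∀ x : ℝ, 0 ≤ x → Real.log (1 + η / (x + σ2)) = f x := by
    intro x hx
    have h1 : (0:ℝ) < x + σ2 := by linarith
    have h2 : (0:ℝ) < x + A := by linarith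
    have : 1 + η / (x + σ2) = (x + A) / (x + σ2) := by
      field_simp; ring
    rw [this, Real.log_div h2.ne' h1.ne']
  have hderiv : ∀ x : ℝ, 0 < x → deriv f x = (x + A)⁻¹ - (x + σ2)⁻¹ := by
    intro x hx
    have h1 : (0:ℝ) < x + σ2 := by linarith
    have h2 : (0:ℝ) < x + A := by linarith
    have d1 : HasDerivAt (fun y : ℝ => Real.log (y + A)) (1 / (x + A)) x := by
      simpa using (((hasDerivAt_id x).add_const A).log h2.ne')
    have d2 : HasDerivAt (fun y : ℝ => Real.log (y + σ2)) (1 / (x + σ2)) x := by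
      simpa using (((hasDerivAt_id x).add_const σ2).log h1.ne')
    have := (d1.sub d2).deriv
    rw [one_div, one_div] at this; exact this
  have hdiff : DifferentiableOn ℝ f (interior (Set.Ici (0:ℝ))) := by
    rw [interior_Ici]
    intro x hx
    have hx' : (0:ℝ) < x := hx
    have h1 : (0:ℝ) < x + σ2 := by linarith
    have h2 : (0:ℝ) < x + A := by linarith
    have d1 : DifferentiableAt ℝ (fun y : ℝ => Real.log (y + A)) x :=
      (((hasDerivAt_id x).add_const A).log h2.ne').differentiableAt
    have d2 : DifferentiableAt ℝ (fun y : ℝ => Real.log (y + σ2)) x :=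
      (((hasDerivAt_id x).add_const σ2).log h1.ne').differentiableAt
    exact (d1.sub d2).differentiableWithinAt
  have hcont : ContinuousOn f (Set.Ici (0:ℝ)) := by
    apply ContinuousOn.sub
    · apply ContinuousOn.log
      · fun_prop
      · intro x hx
        have : (0:ℝ) ≤ x := hx
        positivity
    · apply ContinuousOn.log
      · fun_prop
      · intro x hx
        have : (0:ℝ) ≤ x := hx
        positivity
  have hmono : MonotoneOn (deriv f) (interior (Set.Ici (0:ℝ))) := by
    rw [interior_Ici]
    intro x hx y hy hxy
    have hx' : (0:ℝ) < x := hx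
    have hy' : (0:ℝ) < y := hy
    rw [hderiv x hx', hderiv y hy']
    have h1 : (0:ℝ) < x + σ2 := by linarith
    have h2 : (0:ℝ) < x + A := by linarith
    have h3 : (0:ℝ) < y + σ2 := by linarith
    have h4 : (0:ℝ) < y + A := by linarith
    rw [sub_le_sub_iff]
    rw [← sub_nonneg]
    have e1 : (y + A)⁻¹ + (x + σ2)⁻¹ - ((x + A)⁻¹ + (y + σ2)⁻¹)
        = (y - x) * η * ((x+A)*(y+A)*(x+σ2)*(y+σ2))⁻¹ * ((x + y) + A + σ2) := by
      field_simp
      ring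
    rw [e1]
    have : (0:ℝ) < (x+A)*(y+A)*(x+σ2)*(y+σ2) := by positivity
    have h5 : 0 ≤ y - x := by linarith
    positivity
  have hconv : ConvexOn ℝ (Set.Ici 0) f :=
    hmono.convexOn_of_deriv (convex_Ici 0) hcont hdiff
  refine ⟨convex_Ici 0, fun x hx y hy a b ha hb hab => ?_⟩
  have hmem : a • x + b • y ∈ Set.Ici (0:ℝ) := (convex_Ici 0) hx hy ha hb hab
  simp only []
  rw [key _ hmem, key _ hx, key _ hy]
  exact hconv.2 hx hy ha hb hab

lemma aux_integral_mul_complex {Ω : Type*} [MeasurableSpace Ω] {μ : Measure Ω}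
    [IsProbabilityMeasure μ] {X Y : Ω → ℂ} (h : IndepFun X Y μ)
    (hX : Integrable X μ) (hY : Integrable Y μ) :
    ∫ ω, X ω * Y ω ∂μ = (∫ ω, X ω ∂μ) * ∫ ω, Y ω ∂μ := by
  have hXY : Integrable (fun ω => X ω * Y ω) μ := h.integrable_mul hX hY
  have hXre : Integrable (fun ω => (X ω).re) μ := hX.re
  have hXim : Integrable (fun ω => (X ω).im) μ := hX.im
  have hYre : Integrable (fun ω => (Y ω).re) μ := hY.re
  have hYim : Integrable (fun ω => (Y ω).im) μ := hY.im
  have irr : IndepFun (fun ω => (X ω).re) (fun ω => (Y ω).re) μ :=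
    h.comp Complex.measurable_re Complex.measurable_re
  have iri : IndepFun (fun ω => (X ω).re) (fun ω => (Y ω).im) μ :=
    h.comp Complex.measurable_re Complex.measurable_im
  have iir : IndepFun (fun ω => (X ω).im) (fun ω => (Y ω).re) μ :=
    h.comp Complex.measurable_im Complex.measurable_re
  have iii : IndepFun (fun ω => (X ω).im) (fun ω => (Y ω).im) μ :=
    h.comp Complex.measurable_im Complex.measurable_im
  have err : ∫ ω, (X ω).re * (Y ω).re ∂μ = (∫ ω, (X ω).re ∂μ) * ∫ ω, (Y ω).re ∂μ :=
    irr.integral_fun_mul_eq_mul_integral hXre.1 hYre.1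
  have eri : ∫ ω, (X ω).re * (Y ω).im ∂μ = (∫ ω, (X ω).re ∂μ) * ∫ ω, (Y ω).im ∂μ :=
    iri.integral_fun_mul_eq_mul_integral hXre.1 hYim.1
  have eir : ∫ ω, (X ω).im * (Y ω).re ∂μ = (∫ ω, (X ω).im ∂μ) * ∫ ω, (Y ω).re ∂μ :=
    iir.integral_fun_mul_eq_mul_integral hXim.1 hYre.1
  have eii : ∫ ω, (X ω).im * (Y ω).im ∂μ = (∫ ω, (X ω).im ∂μ) * ∫ ω, (Y ω).im ∂μ :=
    iii.integral_fun_mul_eq_mul_integral hXim.1 hYim.1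
  have i1 : Integrable (fun ω => (X ω).re * (Y ω).re) μ := irr.integrable_mul hXre hYre
  have i2 : Integrable (fun ω => (X ω).im * (Y ω).im) μ := iii.integrable_mul hXim hYim
  have i3 : Integrable (fun ω => (X ω).re * (Y ω).im) μ := iri.integrable_mul hXre hYim
  have i4 : Integrable (fun ω => (X ω).im * (Y ω).re) μ := iir.integrable_mul hXim hYre
  apply Complex.ext
  · have h1 : (∫ ω, X ω * Y ω ∂μ).re = ∫ ω, (X ω * Y ω).re ∂μ := (integral_re hXY).symm
    rw [h1]
    have h2 : ∀ ω, (X ω * Y ω).re = (X ω).re * (Y ω).re - (X ω).im * (Y ω).im :=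
      fun ω => Complex.mul_re _ _
    rw [integral_congr_ae (Filter.Eventually.of_forall h2), integral_sub i1 i2]
    rw [err, eii, Complex.mul_re]
    have rX := integral_re hX; have rY := integral_re hY
    have iX := integral_im hX; have iY := integral_im hY
    simp only [RCLike.re_to_complex, RCLike.im_to_complex] at rX rY iX iY
    rw [← rX, ← rY, ← iX, ← iY]
  · have h1 : (∫ ω, X ω * Y ω ∂μ).im = ∫ ω, (X ω * Y ω).im ∂μ := (integral_im hXY).symm
    rw [h1]
    have h2 : ∀ ω, (X ω * Y ω).im = (X ω).re * (Y ω).im + (X ω).im * (Y ω).re :=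
      fun ω => Complex.mul_im _ _
    rw [integral_congr_ae (Filter.Eventually.of_forall h2), integral_add i3 i4]
    rw [eri, eir, Complex.mul_im]
    have rX := integral_re hX; have rY := integral_re hY
    have iX := integral_im hX; have iY := integral_im hY
    simp only [RCLike.re_to_complex, RCLike.im_to_complex] at rX rY iX iY
    rw [← rX, ← rY, ← iX, ← iY]

lemma aux_half_half : (1:ENNReal)/1 = 1/2 + 1/2 := by
  rw [ENNReal.div_add_div_same, one_div]
  norm_num
  rw [ENNReal.div_self] <;> norm_num

lemma aux_memLp_conj {Ω : Type*} [MeasurableSpace Ω] {μ : Measure Ω} {f : Ω → ℂ}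
    {p : ENNReal} (hf : MemLp f p μ) : MemLp (fun ω => conj (f ω)) p μ :=
  ⟨RCLike.continuous_conj.comp_aestronglyMeasurable hf.1,
    by rw [show (fun ω => conj (f ω)) = conj f from rfl, eLpNorm_conj]; exact hf.2⟩

lemma aux_integrable_mul_L2 {Ω : Type*} [MeasurableSpace Ω] {μ : Measure Ω}
    {f g : Ω → ℂ} (hf : MemLp f 2 μ) (hg : MemLp g 2 μ) :
    Integrable (fun ω => f ω * g ω) μ := by
  have := hf.smul (p := 2) (q := 2) (r := 1) hg
  rw [memLp_one_iff_integrable] at this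
  simpa [smul_eq_mul, mul_comm, Pi.mul_def] using this

lemma aux_sum_sq {Ω : Type*} [MeasurableSpace Ω] {μ : Measure Ω} [IsProbabilityMeasure μ]
    {n : ℕ} {f : Fin n → Ω → ℂ} (hf : ∀ i, MemLp (f i) 2 μ)
    (horth : ∀ i j, i ≠ j → ∫ ω, f i ω * conj (f j ω) ∂μ = 0) :
    ∫ ω, ‖∑ i, f i ω‖ ^ 2 ∂μ = ∑ i, ∫ ω, ‖f i ω‖ ^ 2 ∂μ := by
  have hint : ∀ i j, Integrable (fun ω => f i ω * conj (f j ω)) μ := fun i j =>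
    aux_integrable_mul_L2 (hf i) (aux_memLp_conj (hf j))
  have hintre : ∀ i j, Integrable (fun ω => (f i ω * conj (f j ω)).re) μ := fun i j => by
    have := (hint i j).re
    simpa [RCLike.re_to_complex] using this
  have hsq : ∀ z : ℂ, ‖z‖ ^ 2 = (z * conj z).re := by
    intro z
    rw [Complex.mul_conj]
    simp [Complex.sq_norm]
  have hpt : ∀ ω, ‖∑ i, f i ω‖ ^ 2 = ∑ i, ∑ j, (f i ω * conj (f j ω)).re := by
    intro ω
    rw [hsq]
    rw [map_sum (starRingEnd ℂ), Finset.sum_mul_sum]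
    rw [Complex.re_sum]
    exact Finset.sum_congr rfl fun i _ => (Complex.re_sum _ _)
  calc ∫ ω, ‖∑ i, f i ω‖ ^ 2 ∂μ
      = ∫ ω, ∑ i, ∑ j, (f i ω * conj (f j ω)).re ∂μ := by
        exact integral_congr_ae (Filter.Eventually.of_forall hpt)
    _ = ∑ i, ∑ j, ∫ ω, (f i ω * conj (f j ω)).re ∂μ := by
        rw [integral_finset_sum _ fun i _ => integrable_finset_sum _ fun j _ => hintre i j]
        exact Finset.sum_congr rfl fun i _ => integral_finset_sum _ fun j _ => hintre i j
    _ = ∑ i, ∫ ω, ‖f i ω‖ ^ 2 ∂μ := by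
        refine Finset.sum_congr rfl fun i _ => ?_
        rw [Finset.sum_eq_single i]
        · exact integral_congr_ae (Filter.Eventually.of_forall fun ω => ((hsq (f i ω)).symm))
        · intro j _ hj
          have : ∫ ω, (f i ω * conj (f j ω)).re ∂μ = (∫ ω, f i ω * conj (f j ω) ∂μ).re := by
            have := integral_re (hint i j)
            simpa [RCLike.re_to_complex] using this
          rw [this, horth i j (Ne.symm hj)]
          · rfl
        · intro h
          exact absurd (Finset.mem_univ i) h


/-- **Closed-form lower bound on the downlink achievable rate (Theorem 2, abstract form).**
With square-integrable error coefficients `e_i`, constants `c_j`, and zero-mean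
unit-variance symbols `s_i`, `u_j` that are mutually independent and independent of the
`e_i`, the achievable rate `E[log₂(1 + η / (|∑ e_i s_i|² + |∑ c_j u_j|² + σ²))]` is at
least `log₂(1 + η / (∑ E|e_i|² + ∑ |c_j|² + σ²))`. -/
theorem stmt7 {Ω : Type*} [MeasurableSpace Ω] (μ : Measure Ω) [IsProbabilityMeasure μ]
    (K J : ℕ) (hK : 0 < K) (hJ : 0 < J) (η σ2 : ℝ) (hη : 0 < η) (hσ2 : 0 < σ2)
    (e : Fin K → Ω → ℂ) (c : Fin J → ℂ) (s : Fin K → Ω → ℂ) (u : Fin J → Ω → ℂ)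
    (heMeas : ∀ i, Measurable (e i)) (hsMeas : ∀ i, Measurable (s i))
    (huMeas : ∀ j, Measurable (u j))
    (heL2 : ∀ i, MemLp (e i) 2 μ)
    (hIndepAll : iIndepFun (Sum.elim s u) μ)
    (hIndepE : IndepFun (fun ω => fun x : Fin K ⊕ Fin J => Sum.elim s u x ω)
      (fun ω => fun i => e i ω) μ)
    (hsMean : ∀ i, ∫ ω, s i ω ∂μ = 0) (huMean : ∀ j, ∫ ω, u j ω ∂μ = 0)
    (hsVar : ∀ i, ∫ ω, ‖s i ω‖ ^ 2 ∂μ = 1) (huVar : ∀ j, ∫ ω, ‖u j ω‖ ^ 2 ∂μ = 1)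
    (hlogInt : Integrable (fun ω => Real.log (1 + η /
      (‖∑ i, e i ω * s i ω‖ ^ 2 + ‖∑ j, c j * u j ω‖ ^ 2 + σ2))) μ) :
    Real.logb 2 (1 + η / (∑ i, ∫ ω, ‖e i ω‖ ^ 2 ∂μ + ∑ j, ‖c j‖ ^ 2 + σ2)) ≤
      ∫ ω, Real.logb 2 (1 + η /
        (‖∑ i, e i ω * s i ω‖ ^ 2 + ‖∑ j, c j * u j ω‖ ^ 2 + σ2)) ∂μ := by
  classical
  -- integrability of squared norms of symbols
  have hsInt2 : ∀ i, Integrable (fun ω => ‖s i ω‖ ^ 2) μ := by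
    intro i
    by_contra h
    have := hsVar i
    rw [integral_undef h] at this
    norm_num at this
  have huInt2 : ∀ j, Integrable (fun ω => ‖u j ω‖ ^ 2) μ := by
    intro j
    by_contra h
    have := huVar j
    rw [integral_undef h] at this
    norm_num at this
  have hsL2 : ∀ i, MemLp (s i) 2 μ := fun i =>
    (memLp_two_iff_integrable_sq_norm (hsMeas i).aestronglyMeasurable).2 (hsInt2 i)
  have huL2 : ∀ j, MemLp (u j) 2 μ := fun j =>
    (memLp_two_iff_integrable_sq_norm (huMeas j).aestronglyMeasurable).2 (huInt2 j)
  have hsL1 : ∀ i, Integrable (s i) μ := fun i => (hsL2 i).integrable one_le_two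
  have huL1 : ∀ j, Integrable (u j) μ := fun j => (huL2 j).integrable one_le_two
  have heInt2 : ∀ i, Integrable (fun ω => ‖e i ω‖ ^ 2) μ := fun i =>
    (memLp_two_iff_integrable_sq_norm (heMeas i).aestronglyMeasurable).1 (heL2 i)
  -- pairwise independence of symbols
  have hss : ∀ i j : Fin K, i ≠ j → IndepFun (s i) (s j) μ := by
    intro i j hij
    have h := hIndepAll.indepFun
      (show (Sum.inl i : Fin K ⊕ Fin J) ≠ Sum.inl j by simpa using hij)
    exact h
  have huu : ∀ i j : Fin J, i ≠ j → IndepFun (u i) (u j) μ := by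
    intro i j hij
    have h := hIndepAll.indepFun
      (show (Sum.inr i : Fin K ⊕ Fin J) ≠ Sum.inr j by simpa using hij)
    exact h
  -- independence of e-products vs s-products
  have hSE : ∀ i j : Fin K, IndepFun (fun ω => s i ω * conj (s j ω))
      (fun ω => e i ω * conj (e j ω)) μ := by
    intro i j
    have hφ : Measurable (fun v : Fin K ⊕ Fin J → ℂ =>
        v (Sum.inl i) * conj (v (Sum.inl j))) :=
      (measurable_pi_apply _).mul (Complex.continuous_conj.measurable.comp (measurable_pi_apply _))
    have hψ : Measurable (fun w : Fin K → ℂ => w i * conj (w j)) :=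
      (measurable_pi_apply _).mul (Complex.continuous_conj.measurable.comp (measurable_pi_apply _))
    exact hIndepE.comp hφ hψ
  have hSEsq : ∀ i : Fin K, IndepFun (fun ω => ‖e i ω‖ ^ 2) (fun ω => ‖s i ω‖ ^ 2) μ := by
    intro i
    have hφ : Measurable (fun v : Fin K ⊕ Fin J → ℂ => ‖v (Sum.inl i)‖ ^ 2) :=
      (measurable_pi_apply _).norm.pow_const 2
    have hψ : Measurable (fun w : Fin K → ℂ => ‖w i‖ ^ 2) :=
      (measurable_pi_apply _).norm.pow_const 2
    exact (hIndepE.comp hφ hψ).symm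
  -- L2 membership of e i * s i
  have hesL2 : ∀ i, MemLp (fun ω => e i ω * s i ω) 2 μ := by
    intro i
    have h1 : Integrable ((fun ω => ‖e i ω‖ ^ 2) * fun ω => ‖s i ω‖ ^ 2) μ :=
      (hSEsq i).integrable_mul (heInt2 i) (hsInt2 i)
    have h2 : Integrable (fun ω => ‖e i ω * s i ω‖ ^ 2) μ := by
      simpa [norm_mul, mul_pow, Pi.mul_def] using h1
    exact (memLp_two_iff_integrable_sq_norm
      ((heMeas i).mul (hsMeas i)).aestronglyMeasurable).2 h2
  -- diagonal terms for e-part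
  have hesDiag : ∀ i, ∫ ω, ‖e i ω * s i ω‖ ^ 2 ∂μ = ∫ ω, ‖e i ω‖ ^ 2 ∂μ := by
    intro i
    have h0 : ∫ ω, ‖e i ω * s i ω‖ ^ 2 ∂μ = ∫ ω, ‖e i ω‖ ^ 2 * ‖s i ω‖ ^ 2 ∂μ := by
      apply integral_congr_ae
      filter_upwards with ω
      rw [norm_mul, mul_pow]
    rw [h0]
    have hmul : ∫ ω, ‖e i ω‖ ^ 2 * ‖s i ω‖ ^ 2 ∂μ
        = (∫ ω, ‖e i ω‖ ^ 2 ∂μ) * ∫ ω, ‖s i ω‖ ^ 2 ∂μ :=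
      (hSEsq i).integral_fun_mul_eq_mul_integral (heInt2 i).1 (hsInt2 i).1
    rw [hmul, hsVar i, mul_one]
  -- orthogonality for e-part
  have hesOrth : ∀ i j, i ≠ j →
      ∫ ω, (e i ω * s i ω) * conj (e j ω * s j ω) ∂μ = 0 := by
    intro i j hij
    have h0 : ∀ ω, (e i ω * s i ω) * conj (e j ω * s j ω)
        = (e i ω * conj (e j ω)) * (s i ω * conj (s j ω)) := by
      intro ω
      rw [map_mul]
      ring
    rw [integral_congr_ae (Filter.Eventually.of_forall h0)]
    have hInt1 : Integrable (fun ω => e i ω * conj (e j ω)) μ :=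
      aux_integrable_mul_L2 (heL2 i) (aux_memLp_conj (heL2 j))
    have hInt2 : Integrable (fun ω => s i ω * conj (s j ω)) μ :=
      aux_integrable_mul_L2 (hsL2 i) (aux_memLp_conj (hsL2 j))
    rw [aux_integral_mul_complex (hSE i j).symm hInt1 hInt2]
    have hconjmeas : Measurable (fun z : ℂ => conj z) := Complex.continuous_conj.measurable
    have hIsj : IndepFun (s i) (fun ω => conj (s j ω)) μ :=
      (hss i j hij).comp measurable_id hconjmeas
    have hzero : ∫ ω, s i ω * conj (s j ω) ∂μ = 0 := by
      rw [aux_integral_mul_complex hIsj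
        (hsL1 i) ((aux_memLp_conj (hsL2 j)).integrable one_le_two), hsMean i, zero_mul]
    rw [hzero, mul_zero]
  -- e-part expectation
  have hE : ∫ ω, ‖∑ i, e i ω * s i ω‖ ^ 2 ∂μ = ∑ i, ∫ ω, ‖e i ω‖ ^ 2 ∂μ := by
    rw [aux_sum_sq hesL2 hesOrth]
    exact Finset.sum_congr rfl fun i _ => hesDiag i
  -- u-part
  have hcuL2 : ∀ j, MemLp (fun ω => c j * u j ω) 2 μ := fun j => (huL2 j).const_mul (c j)
  have hcuDiag : ∀ j, ∫ ω, ‖c j * u j ω‖ ^ 2 ∂μ = ‖c j‖ ^ 2 := by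
    intro j
    have h0 : ∫ ω, ‖c j * u j ω‖ ^ 2 ∂μ = ∫ ω, ‖c j‖ ^ 2 * ‖u j ω‖ ^ 2 ∂μ := by
      apply integral_congr_ae
      filter_upwards with ω
      rw [norm_mul, mul_pow]
    rw [h0, integral_const_mul, huVar j, mul_one]
  have hcuOrth : ∀ i j, i ≠ j →
      ∫ ω, (c i * u i ω) * conj (c j * u j ω) ∂μ = 0 := by
    intro i j hij
    have h0 : ∀ ω, (c i * u i ω) * conj (c j * u j ω)
        = (c i * conj (c j)) * (u i ω * conj (u j ω)) := by
      intro ω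
      rw [map_mul]
      ring
    rw [integral_congr_ae (Filter.Eventually.of_forall h0), integral_const_mul]
    have hconjmeas : Measurable (fun z : ℂ => conj z) := Complex.continuous_conj.measurable
    have hIuj : IndepFun (u i) (fun ω => conj (u j ω)) μ :=
      (huu i j hij).comp measurable_id hconjmeas
    have hzero : ∫ ω, u i ω * conj (u j ω) ∂μ = 0 := by
      rw [aux_integral_mul_complex hIuj
        (huL1 i) ((aux_memLp_conj (huL2 j)).integrable one_le_two), huMean i, zero_mul]
    rw [hzero, mul_zero]
  have hU : ∫ ω, ‖∑ j, c j * u j ω‖ ^ 2 ∂μ = ∑ j, ‖c j‖ ^ 2 := by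
    rw [aux_sum_sq hcuL2 hcuOrth]
    exact Finset.sum_congr rfl fun j _ => hcuDiag j
  -- the interference random variable
  set T : Ω → ℝ := fun ω => ‖∑ i, e i ω * s i ω‖ ^ 2 + ‖∑ j, c j * u j ω‖ ^ 2 with hT
  have hEsumL2 : MemLp (fun ω => ∑ i, e i ω * s i ω) 2 μ :=
    by simpa using memLp_finset_sum Finset.univ fun i (_ : i ∈ Finset.univ) => hesL2 i
  have hUsumL2 : MemLp (fun ω => ∑ j, c j * u j ω) 2 μ :=
    by simpa using memLp_finset_sum Finset.univ fun j (_ : j ∈ Finset.univ) => hcuL2 j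
  have hTi : Integrable T μ := by
    apply Integrable.add
    · exact (memLp_two_iff_integrable_sq_norm hEsumL2.1).1 hEsumL2
    · exact (memLp_two_iff_integrable_sq_norm hUsumL2.1).1 hUsumL2
  have hTmean : ∫ ω, T ω ∂μ = ∑ i, ∫ ω, ‖e i ω‖ ^ 2 ∂μ + ∑ j, ‖c j‖ ^ 2 := by
    rw [hT]
    rw [integral_add ((memLp_two_iff_integrable_sq_norm hEsumL2.1).1 hEsumL2)
      ((memLp_two_iff_integrable_sq_norm hUsumL2.1).1 hUsumL2), hE, hU]
  -- Jensen
  set g : ℝ → ℝ := fun x => Real.log (1 + η / (x + σ2)) with hg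
  have hconv : ConvexOn ℝ (Set.Ici 0) g := aux_convex hη hσ2
  have hgc : ContinuousOn g (Set.Ici (0:ℝ)) := by
    have hin : ContinuousOn (fun x : ℝ => 1 + η / (x + σ2)) (Set.Ici 0) := by
      apply continuousOn_const.add
      apply continuousOn_const.div
      · fun_prop
      · intro x hx
        have : (0:ℝ) ≤ x := hx
        positivity
    apply Real.continuousOn_log.comp hin
    intro x hx
    have hx' : (0:ℝ) ≤ x := hx
    have : 0 < 1 + η / (x + σ2) := by positivity
    simpa using this.ne'
  have hfs : ∀ᵐ ω ∂μ, T ω ∈ Set.Ici (0:ℝ) := by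
    filter_upwards with ω
    have : (0:ℝ) ≤ T ω := by positivity
    exact this
  have hgi : Integrable (fun ω => g (T ω)) μ := hlogInt
  have jensen := hconv.map_integral_le hgc isClosed_Ici hfs hTi hgi
  rw [hTmean] at jensen
  -- conclude with logb
  have hlog2 : (0:ℝ) < Real.log 2 := Real.log_pos one_lt_two
  have hrhs : ∫ ω, Real.logb 2 (1 + η /
      (‖∑ i, e i ω * s i ω‖ ^ 2 + ‖∑ j, c j * u j ω‖ ^ 2 + σ2)) ∂μ
      = (∫ ω, g (T ω) ∂μ) / Real.log 2 := by
    rw [← integral_div]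
    rfl
  rw [hrhs, Real.logb, hg]
  have harg : ∑ i, ∫ ω, ‖e i ω‖ ^ 2 ∂μ + ∑ j, ‖c j‖ ^ 2 + σ2
      = (∑ i, ∫ ω, ‖e i ω‖ ^ 2 ∂μ + ∑ j, ‖c j‖ ^ 2) + σ2 := by ring
  rw [harg]
  gcongr
end

section
/- Let n be a positive integer, c > 0 and P > 0 real numbers, and y : Fin n → ℝ with y_i > 0 for all i. Define T := (c·P + ∑_j y_j)/n and x*_i := (T − y_i)/c, and assume x*_i ≥ 0 for all i. Then: (1) ∑_i x*_i = P; (2) y_i + c·x*_i = T for all i; (3) ∑_i 1/(y_i + c·x*_i) = n²/(∑_j y_j + c·P); and (4) for every x : Fin n → ℝ with x_i ≥ 0 for all i and ∑_i x_i ≤ P, ∑_i 1/(y_i + c·x*_i) ≤ ∑_i 1/(y_i + c·x_i). In other words, x* is a global minimizer of the water-filling objective over the feasible set. -/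
lemma cauchy_aux (n : ℕ) (a : Fin n → ℝ) (ha : ∀ i, 0 < a i) :
    (n : ℝ) ^ 2 ≤ (∑ i, a i) * ∑ i, 1 / a i := by
  have h := Finset.sum_mul_sq_le_sq_mul_sq Finset.univ
    (fun i => Real.sqrt (a i)) (fun i => 1 / Real.sqrt (a i))
  have h1 : ∀ i : Fin n, Real.sqrt (a i) * (1 / Real.sqrt (a i)) = 1 := by
    intro i
    have : Real.sqrt (a i) ≠ 0 := ne_of_gt (Real.sqrt_pos.2 (ha i))
    field_simp
  have h2 : ∀ i : Fin n, Real.sqrt (a i) ^ 2 = a i := fun i =>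
    Real.sq_sqrt (ha i).le
  have h3 : ∀ i : Fin n, (1 / Real.sqrt (a i)) ^ 2 = 1 / a i := by
    intro i
    rw [div_pow, one_pow, h2]
  simp only [h1, h2, h3, Finset.sum_const, Finset.card_univ, Fintype.card_fin,
    nsmul_eq_mul, mul_one] at h
  exact h

/-- **The KKT water-filling solution (equation (KKT) of Appendix A).** With
`T = (c P + ∑ y_j)/n` and `x*_i = (T - y_i)/c`, if all `x*_i ≥ 0` then `x*` is feasible
(`∑ x*_i = P`), attains the common level `y_i + c x*_i = T`, its objective value equals
`n² / (∑ y_j + c P)`, and `x*` globally minimizes `∑ 1/(y_i + c x_i)` over the feasible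
set. -/
theorem stmt9 (n : ℕ) (hn : 0 < n) (c P : ℝ) (hc : 0 < c) (hP : 0 < P)
    (y : Fin n → ℝ) (hy : ∀ i, 0 < y i)
    (T : ℝ) (hT : T = (c * P + ∑ j, y j) / n)
    (xs : Fin n → ℝ) (hxs : xs = fun i => (T - y i) / c)
    (hnonneg : ∀ i, 0 ≤ xs i) :
    (∑ i, xs i = P) ∧ (∀ i, y i + c * xs i = T) ∧
    (∑ i, 1 / (y i + c * xs i) = (n : ℝ) ^ 2 / (∑ j, y j + c * P)) ∧
    (∀ x : Fin n → ℝ, (∀ i, 0 ≤ x i) → ∑ i, x i ≤ P →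
      ∑ i, 1 / (y i + c * xs i) ≤ ∑ i, 1 / (y i + c * x i)) := by
  have hn' : (0 : ℝ) < n := by exact_mod_cast hn
  have hSy : 0 < ∑ j, y j := Finset.sum_pos (fun i _ => hy i) (by
    simpa using Finset.univ_nonempty_iff.2 ⟨⟨0, hn⟩⟩)
  have hS : 0 < ∑ j, y j + c * P := by positivity
  have hT0 : 0 < T := by rw [hT]; positivity
  have hlevel : ∀ i, y i + c * xs i = T := by
    intro i; rw [hxs]; field_simp; ring
  have hsum : ∑ i, xs i = P := by
    have : ∑ i, xs i = (n * T - ∑ i, y i) / c := by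
      simp only [hxs, ← Finset.sum_div, Finset.sum_sub_distrib, Finset.sum_const,
        Finset.card_univ, Fintype.card_fin, nsmul_eq_mul]
    rw [this, hT]
    field_simp
    ring
  have hobj : ∑ i, 1 / (y i + c * xs i) = (n : ℝ) ^ 2 / (∑ j, y j + c * P) := by
    simp only [hlevel]
    rw [Finset.sum_const, Finset.card_univ, Fintype.card_fin, nsmul_eq_mul, hT]
    rw [one_div, inv_div, eq_div_iff (ne_of_gt hS)]
    field_simp
    ring
  refine ⟨hsum, hlevel, hobj, ?_⟩
  intro x hx hxP
  have ha : ∀ i, 0 < y i + c * x i := fun i => by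
    have := hx i; have := hy i; positivity
  have hsum_a : ∑ i, (y i + c * x i) ≤ ∑ j, y j + c * P := by
    rw [Finset.sum_add_distrib, ← Finset.mul_sum]
    have : c * ∑ i, x i ≤ c * P := by
      exact mul_le_mul_of_nonneg_left hxP hc.le
    linarith
  have hsum_a_pos : 0 < ∑ i, (y i + c * x i) := Finset.sum_pos (fun i _ => ha i) (by
    simpa using Finset.univ_nonempty_iff.2 ⟨⟨0, hn⟩⟩)
  have hcs := cauchy_aux n (fun i => y i + c * x i) ha
  have hrhs_pos : 0 < ∑ i, 1 / (y i + c * x i) :=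
    Finset.sum_pos (fun i _ => by have := ha i; positivity) (by
      simpa using Finset.univ_nonempty_iff.2 ⟨⟨0, hn⟩⟩)
  rw [hobj]
  rw [div_le_iff₀ hS]
  calc (n : ℝ) ^ 2 ≤ (∑ i, (y i + c * x i)) * ∑ i, 1 / (y i + c * x i) := hcs
    _ ≤ (∑ j, y j + c * P) * ∑ i, 1 / (y i + c * x i) :=
        mul_le_mul_of_nonneg_right hsum_a hrhs_pos.le
    _ = (∑ i, 1 / (y i + c * x i)) * (∑ j, y j + c * P) := mul_comm _ _
end

section
/- Let n be a positive integer and let A, B be n×n Hermitian positive semidefinite complex matrices with A positive definite. Let a_1 ≥ a_2 ≥ … ≥ a_n be the eigenvalues of A sorted in decreasing order and b_1 ≤ b_2 ≤ … ≤ b_n the eigenvalues of B sorted in increasing order. Then A + B is positive definite and Re Tr((A + B)⁻¹) ≥ ∑_{i=1}^n 1/(a_i + b_i). -/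
open Matrix
open scoped ComplexOrder

namespace Stmt10

variable {n : ℕ}

/-- first `m` indices of `Fin n` -/
def pref (n m : ℕ) : Finset (Fin n) := Finset.univ.filter (fun i => (i : ℕ) < m)

lemma mem_pref {m : ℕ} {i : Fin n} : i ∈ pref n m ↔ (i : ℕ) < m := by
  simp [pref]

lemma pref_card {m : ℕ} (hm : m ≤ n) : (pref n m).card = m := by
  classical
  have h : (pref n m).image (Fin.val) = Finset.range m := by
    ext k
    simp only [Finset.mem_image, mem_pref, Finset.mem_range]
    constructor
    · rintro ⟨i, hi, rfl⟩; exact hi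
    · intro hk; exact ⟨⟨k, lt_of_lt_of_le hk hm⟩, hk, rfl⟩
  have := Finset.card_image_of_injective (pref n m) (Fin.val_injective)
  rw [h, Finset.card_range] at this
  omega

lemma pref_n_eq_univ : pref n n = Finset.univ := by
  ext i; simp [mem_pref, i.isLt]

lemma card_le_n (P : Finset (Fin n)) : P.card ≤ n := by
  simpa using Finset.card_le_univ P

/-- sum over any subset is at most sum over the prefix of the same size, for antitone weights -/
lemma sum_le_sum_pref (x : Fin n → ℝ) (hx : Antitone x) (P : Finset (Fin n)) :
    ∑ i ∈ P, x i ≤ ∑ i ∈ pref n P.card, x i := by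
  classical
  suffices H : ∀ k (P : Finset (Fin n)), (P \ pref n P.card).card = k →
      ∑ i ∈ P, x i ≤ ∑ i ∈ pref n P.card, x i from H _ P rfl
  intro k
  induction k with
  | zero =>
    intro P hP
    have hsub : P ⊆ pref n P.card := by
      intro i hi
      by_contra hnot
      have : i ∈ P \ pref n P.card := Finset.mem_sdiff.mpr ⟨hi, hnot⟩
      have := Finset.card_pos.mpr ⟨i, this⟩
      omega
    have : P = pref n P.card :=
      Finset.eq_of_subset_of_card_le hsub (le_of_eq (pref_card (card_le_n P)))
    rw [← this]
  | succ k ih =>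
    intro P hP
    have hne : (P \ pref n P.card).Nonempty := by
      rw [← Finset.card_pos, hP]; omega
    obtain ⟨i, hi⟩ := hne
    have hiP : i ∈ P := (Finset.mem_sdiff.mp hi).1
    have hipref : ¬ ((i : ℕ) < P.card) := fun h =>
      (Finset.mem_sdiff.mp hi).2 (mem_pref.mpr h)
    -- find j in pref \ P
    have hne2 : (pref n P.card \ P).Nonempty := by
      by_contra hempty
      rw [Finset.not_nonempty_iff_eq_empty, Finset.sdiff_eq_empty_iff_subset] at hempty
      have : pref n P.card = P :=
        Finset.eq_of_subset_of_card_le hempty (by rw [pref_card (card_le_n P)])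
      have h1 := (Finset.mem_sdiff.mp hi).1
      have h2 := (Finset.mem_sdiff.mp hi).2
      rw [this] at h2
      exact h2 h1
    obtain ⟨j, hj⟩ := hne2
    have hjpref : (j : ℕ) < P.card := mem_pref.mp (Finset.mem_sdiff.mp hj).1
    have hjP : j ∉ P := (Finset.mem_sdiff.mp hj).2
    have hji : j ≤ i := by
      have : (j : ℕ) ≤ (i : ℕ) := by omega
      exact this
    set P' := insert j (P.erase i) with hP'def
    have hjnotin : j ∉ P.erase i := fun h => hjP (Finset.mem_of_mem_erase h)
    have hcard' : P'.card = P.card := by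
      rw [hP'def, Finset.card_insert_of_notMem hjnotin, Finset.card_erase_of_mem hiP]
      have : 0 < P.card := Finset.card_pos.mpr ⟨i, hiP⟩
      omega
    have hsum' : ∑ t ∈ P', x t = x j + (∑ t ∈ P, x t - x i) := by
      rw [hP'def, Finset.sum_insert hjnotin, Finset.sum_erase_eq_sub hiP]
    have hsdiff : P' \ pref n P'.card = (P \ pref n P.card).erase i := by
      rw [hcard', hP'def]
      ext t
      simp only [Finset.mem_sdiff, Finset.mem_insert, Finset.mem_erase, mem_pref]
      constructor
      · rintro ⟨h1 | ⟨hti, htP⟩, h2⟩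
        · exact absurd hjpref (h1 ▸ h2)
        · exact ⟨hti, htP, h2⟩
      · rintro ⟨hti, htP, htpref⟩
        exact ⟨Or.inr ⟨hti, htP⟩, htpref⟩
    have hk' : (P' \ pref n P'.card).card = k := by
      rw [hsdiff, Finset.card_erase_of_mem hi, hP]
      omega
    have := ih P' hk'
    rw [hcard'] at this
    have hxij : x i ≤ x j := hx hji
    calc ∑ t ∈ P, x t = (∑ t ∈ P', x t) + x i - x j := by rw [hsum']; ring
    _ ≤ ∑ t ∈ P', x t := by linarith
    _ ≤ _ := this

/-- prefix sum is at most any subset sum of same cardinality, for monotone weights -/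
lemma sum_pref_le_sum (b : Fin n → ℝ) (hb : Monotone b) (P : Finset (Fin n)) :
    ∑ i ∈ pref n P.card, b i ≤ ∑ i ∈ P, b i := by
  have := sum_le_sum_pref (fun i => -b i) (fun i j h => neg_le_neg (hb h)) P
  simp only [Finset.sum_neg_distrib] at this
  linarith

end Stmt10

namespace Stmt10

variable {n : ℕ}

lemma abel_aux (f w : ℕ → ℝ) (hw : Monotone w)
    (hS : ∀ m, 0 ≤ ∑ k ∈ Finset.range m, f k) :
    ∀ N, ∑ k ∈ Finset.range N, f k * w k ≤ (∑ k ∈ Finset.range N, f k) * w N := by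
  intro N
  induction N with
  | zero => simp
  | succ N ih =>
    rw [Finset.sum_range_succ, Finset.sum_range_succ (f := f)]
    have h1 : (∑ k ∈ Finset.range N, f k) * w N ≤ (∑ k ∈ Finset.range N, f k) * w (N+1) :=
      mul_le_mul_of_nonneg_left (hw (Nat.le_succ N)) (hS N)
    have h2 : f N * w N ≤ f N * w (N+1) ∨ f N * w N ≤ f N * w N := Or.inr le_rfl
    nlinarith [hw (Nat.le_succ N), hS N, hS (N+1), Finset.sum_range_succ f N]

/-- tangent line inequality for 1/x at d -/
lemma tangent {x d : ℝ} (hx : 0 < x) (hd : 0 < d) :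
    1 / d - 1 / x ≤ (x - d) * (1 / d ^ 2) := by
  rw [div_sub_div _ _ (ne_of_gt hd) (ne_of_gt hx)]
  rw [div_le_iff₀ (by positivity)]
  have h := sq_nonneg (x - d)
  have h2 : (0:ℝ) < d ^ 2 := by positivity
  have h3 : (x - d) * (1 / d ^ 2) * (d * x) = (x - d) * x / d := by
    field_simp
  rw [h3, le_div_iff₀ hd]
  nlinarith [sq_nonneg (x - d), mul_pos hx hd]

lemma sum_pref_eq_range (g : Fin n → ℝ) {m : ℕ} (hm : m ≤ n) :
    ∑ i ∈ pref n m, g i = ∑ k ∈ Finset.range m, (if h : k < n then g ⟨k, h⟩ else 0) := by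
  classical
  refine Finset.sum_bij' (fun (i : Fin n) _ => (i : ℕ)) (fun k hk => ⟨k, lt_of_lt_of_le (Finset.mem_range.mp hk) hm⟩) ?_ ?_ ?_ ?_ ?_
  · intro i hi; exact Finset.mem_range.mpr (mem_pref.mp hi)
  · intro k hk; exact mem_pref.mpr (Finset.mem_range.mp hk)
  · intro i hi; simp
  · intro k hk; simp
  · intro i hi
    have : (i : ℕ) < n := i.isLt
    simp [this]

/-- The Abel-summation based majorization conclusion:
if `d` is antitone positive, `ν` positive, prefix sums of `d` dominate below those of `ν`,
with equality of total sums, then `∑ 1/d ≤ ∑ 1/ν`. -/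
lemma abel_conclusion (hn : 0 < n) (ν d : Fin n → ℝ)
    (hd_anti : Antitone d) (hd_pos : ∀ i, 0 < d i) (hν_pos : ∀ i, 0 < ν i)
    (hpref : ∀ m, m ≤ n → ∑ i ∈ pref n m, d i ≤ ∑ i ∈ pref n m, ν i)
    (htot : ∑ i, d i = ∑ i, ν i) :
    ∑ i, 1 / d i ≤ ∑ i, 1 / ν i := by
  classical
  set F : ℕ → ℝ := fun k => if h : k < n then ν ⟨k, h⟩ - d ⟨k, h⟩ else 0 with hF
  set W : ℕ → ℝ := fun k => 1 / (d ⟨min k (n-1), by omega⟩) ^ 2 with hW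
  have hWmono : Monotone W := by
    intro k l hkl
    have h1 : (⟨min k (n-1), by omega⟩ : Fin n) ≤ ⟨min l (n-1), by omega⟩ := by
      simp only [Fin.mk_le_mk]
      omega
    have h2 := hd_anti h1
    have h3 : 0 < d ⟨min l (n-1), by omega⟩ := hd_pos _
    simp only [hW]
    apply one_div_le_one_div_of_le (by positivity)
    exact pow_le_pow_left₀ (le_of_lt h3) h2 2
  have hSnn : ∀ m, 0 ≤ ∑ k ∈ Finset.range m, F k := by
    intro m
    rcases le_or_gt m n with hmn | hmn
    · have h1 : ∑ k ∈ Finset.range m, F k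
          = (∑ i ∈ pref n m, ν i) - (∑ i ∈ pref n m, d i) := by
        rw [← Finset.sum_sub_distrib, sum_pref_eq_range (fun i => ν i - d i) hmn]
      rw [h1]
      linarith [hpref m hmn]
    · have h1 : ∑ k ∈ Finset.range m, F k = ∑ k ∈ Finset.range n, F k := by
        symm
        apply Finset.sum_subset (Finset.range_subset_range.mpr (le_of_lt hmn))
        intro k _ hk
        have : ¬ (k < n) := by simpa using hk
        simp [hF, this]
      have h2 : ∑ k ∈ Finset.range n, F k
          = (∑ i ∈ pref n n, ν i) - (∑ i ∈ pref n n, d i) := by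
        rw [← Finset.sum_sub_distrib, sum_pref_eq_range (fun i => ν i - d i) le_rfl]
      rw [h1, h2, pref_n_eq_univ, htot]
      simp
  have hStot : ∑ k ∈ Finset.range n, F k = 0 := by
    have h2 : ∑ k ∈ Finset.range n, F k
        = (∑ i ∈ pref n n, ν i) - (∑ i ∈ pref n n, d i) := by
      rw [← Finset.sum_sub_distrib, sum_pref_eq_range (fun i => ν i - d i) le_rfl]
    rw [h2, pref_n_eq_univ, htot]
    simp
  have habel := abel_aux F W hWmono hSnn n
  rw [hStot, zero_mul] at habel
  -- now: ∑ k < n, F k * W k ≤ 0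
  have hterm : ∀ i : Fin n, 1 / d i - 1 / ν i ≤ (ν i - d i) * (1 / d i ^ 2) :=
    fun i => tangent (hν_pos i) (hd_pos i)
  have hconv : ∑ k ∈ Finset.range n, F k * W k = ∑ i : Fin n, (ν i - d i) * (1 / d i ^ 2) := by
    rw [Finset.sum_range]
    apply Finset.sum_congr rfl
    intro i _
    have h1 : ((i : ℕ)) < n := i.isLt
    have h2 : min (i : ℕ) (n-1) = (i : ℕ) := by omega
    simp only [hF, hW, h1, dif_pos]
    congr 2 <;> simp [Fin.eta, h2]
  have : ∑ i : Fin n, (1 / d i - 1 / ν i) ≤ 0 := by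
    calc ∑ i : Fin n, (1 / d i - 1 / ν i) ≤ ∑ i : Fin n, (ν i - d i) * (1 / d i ^ 2) :=
          Finset.sum_le_sum (fun i _ => hterm i)
    _ = ∑ k ∈ Finset.range n, F k * W k := hconv.symm
    _ ≤ 0 := habel
  rw [Finset.sum_sub_distrib] at this
  linarith

end Stmt10

namespace Stmt10

noncomputable section

variable {n : ℕ}

abbrev Esp (n : ℕ) := EuclideanSpace ℂ (Fin n)

/-- linear map with orthonormal eigenbasis `W` and real eigenvalues `f` -/
def lin (W : OrthonormalBasis (Fin n) ℂ (Esp n)) (f : Fin n → ℝ) : Esp n →ₗ[ℂ] Esp n :=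
  W.toBasis.constr ℂ (fun j => (f j : ℂ) • W j)

lemma lin_apply_basis (W : OrthonormalBasis (Fin n) ℂ (Esp n)) (f : Fin n → ℝ) (j : Fin n) :
    lin W f (W j) = (f j : ℂ) • W j := by
  have := W.toBasis.constr_basis ℂ (fun j => (f j : ℂ) • W j) j
  simpa [lin] using this

/-- coefficient of `v` along `W j` -/
def cf (W : OrthonormalBasis (Fin n) ℂ (Esp n)) (j : Fin n) (v : Esp n) : ℂ := inner ℂ (W j) v

lemma exp_inner (W : OrthonormalBasis (Fin n) ℂ (Esp n)) (f : Fin n → ℝ) (x y : Esp n) :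
    (inner ℂ x (lin W f y) : ℂ)
      = ∑ j, (starRingEnd ℂ) (cf W j x) * ((f j : ℂ) * (cf W j y)) := by
  conv_lhs => rw [← W.sum_repr' y]
  rw [map_sum, inner_sum]
  congr 1
  ext j
  rw [LinearMap.map_smul, lin_apply_basis, smul_smul, inner_smul_right,
    ← inner_conj_symm x (W j)]
  simp only [cf]
  ring

lemma toEuclideanLin_mulVec (X : Matrix (Fin n) (Fin n) ℂ) (v : Esp n) :
    (Matrix.toEuclideanLin X v : Fin n → ℂ) = X *ᵥ (v : Fin n → ℂ) := rfl

lemma lin_one (W : OrthonormalBasis (Fin n) ℂ (Esp n)) :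
    lin W (fun _ => (1:ℝ)) = LinearMap.id := by
  apply W.toBasis.ext
  intro j
  rw [W.coe_toBasis, lin_apply_basis]
  simp

/-- quadratic form of a matrix -/
def quad (X : Matrix (Fin n) (Fin n) ℂ) (v : Esp n) : ℝ :=
  (inner ℂ v (Matrix.toEuclideanLin X v) : ℂ).re

def nrm2 (v : Esp n) : ℝ := ((inner ℂ v v : ℂ)).re

lemma nrm2_eq_sum (v : Esp n) : nrm2 v = ∑ i, Complex.normSq (v i) := by
  rw [nrm2, EuclideanSpace.inner_eq_star_dotProduct, dotProduct_comm]
  simp only [dotProduct, Pi.star_apply, Complex.re_sum]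
  congr 1; ext i
  rw [show star (v i) = (starRingEnd ℂ) (v i) from rfl, ← Complex.normSq_eq_conj_mul_self]
  simp

lemma nrm2_nonneg (v : Esp n) : 0 ≤ nrm2 v := by
  rw [nrm2_eq_sum]
  exact Finset.sum_nonneg (fun i _ => Complex.normSq_nonneg _)

lemma nrm2_pos {v : Esp n} (hv : v ≠ 0) : 0 < nrm2 v := by
  rw [nrm2_eq_sum]
  have hex : ∃ i, (v : Fin n → ℂ) i ≠ 0 := by
    by_contra h
    push_neg at h
    exact hv (WithLp.ofLp_injective 2 (funext h))
  obtain ⟨i, hi⟩ := hex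
  exact Finset.sum_pos' (fun j _ => Complex.normSq_nonneg _)
    ⟨i, Finset.mem_univ i, Complex.normSq_pos.mpr hi⟩

lemma nrm2_formula (W : OrthonormalBasis (Fin n) ℂ (Esp n)) (v : Esp n) :
    nrm2 v = ∑ j, Complex.normSq (cf W j v) := by
  have h := exp_inner W (fun _ => (1:ℝ)) v v
  rw [lin_one] at h
  simp only [LinearMap.id_coe, id_eq, Complex.ofReal_one, one_mul] at h
  rw [nrm2, h, Complex.re_sum]
  congr 1; ext j
  rw [← Complex.normSq_eq_conj_mul_self]
  simp

lemma quad_formula {X : Matrix (Fin n) (Fin n) ℂ} {W : OrthonormalBasis (Fin n) ℂ (Esp n)}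
    {f : Fin n → ℝ} (hact : Matrix.toEuclideanLin X = lin W f) (v : Esp n) :
    quad X v = ∑ j, f j * Complex.normSq (cf W j v) := by
  rw [quad, hact, exp_inner, Complex.re_sum]
  congr 1; ext j
  have : (starRingEnd ℂ) (cf W j v) * ((f j : ℂ) * (cf W j v))
      = (f j : ℂ) * ((starRingEnd ℂ) (cf W j v) * (cf W j v)) := by ring
  rw [this, ← Complex.normSq_eq_conj_mul_self]
  simp

/-- matrix with prescribed orthonormal eigenbasis and real eigenvalues -/
def mkMat (W : OrthonormalBasis (Fin n) ℂ (Esp n)) (f : Fin n → ℝ) : Matrix (Fin n) (Fin n) ℂ :=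
  Matrix.toEuclideanLin.symm (lin W f)

lemma mkMat_act (W : OrthonormalBasis (Fin n) ℂ (Esp n)) (f : Fin n → ℝ) :
    Matrix.toEuclideanLin (mkMat W f) = lin W f := by
  rw [mkMat, LinearEquiv.apply_symm_apply]

lemma mkMat_isHermitian (W : OrthonormalBasis (Fin n) ℂ (Esp n)) (f : Fin n → ℝ) :
    (mkMat W f).IsHermitian := by
  rw [Matrix.isHermitian_iff_isSymmetric]
  intro x y
  show (inner ℂ ((Matrix.toEuclideanLin (mkMat W f)) x) y : ℂ) = inner ℂ x ((Matrix.toEuclideanLin (mkMat W f)) y)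
  rw [mkMat_act]
  calc (inner ℂ ((lin W f) x) y : ℂ)
      = (starRingEnd ℂ) (inner ℂ y ((lin W f) x)) := (inner_conj_symm _ _).symm
    _ = (starRingEnd ℂ) (∑ j, (starRingEnd ℂ) (cf W j y) * ((f j : ℂ) * (cf W j x))) := by
        rw [exp_inner]
    _ = ∑ j, (starRingEnd ℂ) (cf W j x) * ((f j : ℂ) * (cf W j y)) := by
        rw [map_sum]
        congr 1; ext j
        simp only [_root_.map_mul, Complex.conj_conj, Complex.conj_ofReal]
        ring
    _ = inner ℂ x ((lin W f) y) := (exp_inner W f x y).symm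

/-- trace formula -/
lemma trace_re {X : Matrix (Fin n) (Fin n) ℂ} {W : OrthonormalBasis (Fin n) ℂ (Esp n)}
    {f : Fin n → ℝ} (hact : Matrix.toEuclideanLin X = lin W f) :
    (Matrix.trace X).re = ∑ j, f j := by
  have h0 : Matrix.toEuclideanLin (n := Fin n) (𝕜 := ℂ)
      = Matrix.toLin (PiLp.basisFun 2 ℂ (Fin n)) (PiLp.basisFun 2 ℂ (Fin n)) := by
    rfl
  have h1 : Matrix.trace X = LinearMap.trace ℂ (Esp n) (Matrix.toEuclideanLin X) := by
    rw [LinearMap.trace_eq_matrix_trace ℂ (PiLp.basisFun 2 ℂ (Fin n)), h0,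
      LinearMap.toMatrix_toLin]
  have h2 : LinearMap.toMatrix W.toBasis W.toBasis (lin W f)
      = Matrix.diagonal (fun j => (f j : ℂ)) := by
    ext i j
    rw [LinearMap.toMatrix_apply, W.coe_toBasis, lin_apply_basis, LinearEquiv.map_smul]
    rw [show (W j : Esp n) = W.toBasis j by rw [W.coe_toBasis], W.toBasis.repr_self]
    by_cases h : i = j
    · subst h; simp
    · simp [Matrix.diagonal, h, Finsupp.single_apply, Ne.symm h]
  rw [h1, hact, LinearMap.trace_eq_matrix_trace ℂ W.toBasis, h2, Matrix.trace_diagonal]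
  rw [show (∑ i, ((f i : ℂ))) = ((∑ i, f i : ℝ) : ℂ) by push_cast; ring]
  exact Complex.ofReal_re _

/-- coefficients vanish off a spanning index set -/
lemma cf_eq_zero_of_mem_span {W : OrthonormalBasis (Fin n) ℂ (Esp n)} {J : Finset (Fin n)}
    {j : Fin n} (hj : j ∉ J) {v : Esp n}
    (hv : v ∈ Submodule.span ℂ (W '' (J : Set (Fin n)))) : cf W j v = 0 := by
  induction hv using Submodule.span_induction with
  | mem x hx =>
    obtain ⟨k, hk, rfl⟩ := hx
    have hne : j ≠ k := fun h => hj (h ▸ hk)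
    exact W.orthonormal.2 hne
  | zero => simp [cf]
  | add x y _ _ hx hy => simp [cf, inner_add_right] at *; rw [hx, hy]; simp
  | smul c x _ hx => simp [cf, inner_smul_right] at *; rw [hx]; simp

lemma finrank_span_card (W : OrthonormalBasis (Fin n) ℂ (Esp n)) (J : Finset (Fin n)) :
    Module.finrank ℂ (Submodule.span ℂ (W '' (J : Set (Fin n)))) = J.card := by
  classical
  have li : LinearIndependent ℂ (fun j : (J : Set (Fin n)) => W j) :=
    (W.orthonormal.comp _ Subtype.val_injective).linearIndependent
  have himg : W '' (J : Set (Fin n)) = Set.range (fun j : (J : Set (Fin n)) => W j) :=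
    Set.image_eq_range _ _
  rw [himg, finrank_span_eq_card li]
  simp

lemma exists_ne_zero_mem_both (V W' : Submodule ℂ (Esp n))
    (h : n < Module.finrank ℂ V + Module.finrank ℂ W') :
    ∃ v : Esp n, v ≠ 0 ∧ v ∈ V ∧ v ∈ W' := by
  have h1 := Submodule.finrank_sup_add_finrank_inf_eq V W'
  have h2 : Module.finrank ℂ ↥(V ⊔ W') ≤ n := by
    have h3 := Submodule.finrank_le (V ⊔ W')
    rwa [finrank_euclideanSpace_fin] at h3
  have h3 : 0 < Module.finrank ℂ ↥(V ⊓ W') := by omega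
  obtain ⟨x, hx⟩ := Module.finrank_pos_iff_exists_ne_zero.mp h3
  refine ⟨(x : Esp n), ?_, x.2.1, x.2.2⟩
  simpa using hx

lemma quad_ge_on_span {X : Matrix (Fin n) (Fin n) ℂ} {W : OrthonormalBasis (Fin n) ℂ (Esp n)}
    {f : Fin n → ℝ} (hact : Matrix.toEuclideanLin X = lin W f) {J : Finset (Fin n)} {t : ℝ}
    (ht : ∀ j ∈ J, t ≤ f j) {v : Esp n}
    (hv : v ∈ Submodule.span ℂ (W '' (J : Set (Fin n)))) :
    t * nrm2 v ≤ quad X v := by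
  rw [quad_formula hact, nrm2_formula W, Finset.mul_sum]
  apply Finset.sum_le_sum
  intro j _
  by_cases hj : j ∈ J
  · exact mul_le_mul_of_nonneg_right (ht j hj) (Complex.normSq_nonneg _)
  · rw [cf_eq_zero_of_mem_span hj hv]; simp

lemma quad_le_on_span {X : Matrix (Fin n) (Fin n) ℂ} {W : OrthonormalBasis (Fin n) ℂ (Esp n)}
    {f : Fin n → ℝ} (hact : Matrix.toEuclideanLin X = lin W f) {J : Finset (Fin n)} {t : ℝ}
    (ht : ∀ j ∈ J, f j ≤ t) {v : Esp n}
    (hv : v ∈ Submodule.span ℂ (W '' (J : Set (Fin n)))) :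
    quad X v ≤ t * nrm2 v := by
  rw [quad_formula hact, nrm2_formula W, Finset.mul_sum]
  apply Finset.sum_le_sum
  intro j _
  by_cases hj : j ∈ J
  · exact mul_le_mul_of_nonneg_right (ht j hj) (Complex.normSq_nonneg _)
  · rw [cf_eq_zero_of_mem_span hj hv]; simp

/-- spectral data: orthonormal eigenbasis with antitone eigenvalue tuple -/
structure SpecData (X : Matrix (Fin n) (Fin n) ℂ) where
  W : OrthonormalBasis (Fin n) ℂ (Esp n)
  val : Fin n → ℝ
  anti : Antitone val
  act : Matrix.toEuclideanLin X = lin W val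


/-- Weyl-type monotonicity with shift -/
lemma weyl_shift {X Y : Matrix (Fin n) (Fin n) ℂ} (DX : SpecData X) (DY : SpecData Y) (β : ℝ)
    (h : ∀ v : Esp n, quad X v ≤ quad Y v + β * nrm2 v) (i : Fin n) :
    DX.val i ≤ DY.val i + β := by
  classical
  set J₁ : Finset (Fin n) := pref n ((i : ℕ) + 1) with hJ₁
  set J₂ : Finset (Fin n) := Finset.univ.filter (fun j => ¬ ((j : ℕ) < (i : ℕ))) with hJ₂
  have hcard₁ : J₁.card = (i : ℕ) + 1 := pref_card i.isLt
  have hcard₂ : J₂.card = n - (i : ℕ) := by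
    rw [hJ₂, Finset.filter_not, Finset.card_sdiff_of_subset (Finset.filter_subset _ _)]
    have h1 : (Finset.univ.filter (fun j : Fin n => (j : ℕ) < (i : ℕ))).card = (i : ℕ) :=
      pref_card (le_of_lt i.isLt)
    rw [Finset.card_univ, Fintype.card_fin, h1]
  set V := Submodule.span ℂ (DX.W '' (J₁ : Set (Fin n))) with hV
  set W' := Submodule.span ℂ (DY.W '' (J₂ : Set (Fin n))) with hW'
  have hdim : n < Module.finrank ℂ V + Module.finrank ℂ W' := by
    rw [hV, hW', finrank_span_card, finrank_span_card, hcard₁, hcard₂]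
    have := i.isLt
    omega
  obtain ⟨v, hv0, hv1, hv2⟩ := exists_ne_zero_mem_both V W' hdim
  have hL : DX.val i * nrm2 v ≤ quad X v := by
    apply quad_ge_on_span DX.act _ hv1
    intro j hj
    have : (j : ℕ) < (i : ℕ) + 1 := by
      simpa [hJ₁, pref] using hj
    exact DX.anti (by exact Fin.le_def.mpr (by omega))
  have hR : quad Y v ≤ DY.val i * nrm2 v := by
    apply quad_le_on_span DY.act _ hv2
    intro j hj
    have : ¬ ((j : ℕ) < (i : ℕ)) := by
      simpa [hJ₂] using hj
    exact DY.anti (by exact Fin.le_def.mpr (by omega))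
  have hn2 : 0 < nrm2 v := nrm2_pos hv0
  have hfin : DX.val i * nrm2 v ≤ (DY.val i + β) * nrm2 v := by
    have := h v
    nlinarith
  exact le_of_mul_le_mul_right hfin hn2

/-- algebra of `lin` -/
lemma lin_add (W : OrthonormalBasis (Fin n) ℂ (Esp n)) (f g : Fin n → ℝ) :
    lin W (f + g) = lin W f + lin W g := by
  apply W.toBasis.ext
  intro j
  rw [W.coe_toBasis]
  simp only [LinearMap.add_apply, lin_apply_basis, Pi.add_apply]
  push_cast
  rw [add_smul]

lemma lin_const (β : ℝ) (W : OrthonormalBasis (Fin n) ℂ (Esp n)) :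
    lin W (fun _ => β) = (β : ℂ) • LinearMap.id := by
  apply W.toBasis.ext
  intro j
  rw [W.coe_toBasis]
  simp [lin_apply_basis]

lemma lin_comp (W : OrthonormalBasis (Fin n) ℂ (Esp n)) (f g : Fin n → ℝ) :
    (lin W f) ∘ₗ (lin W g) = lin W (fun j => f j * g j) := by
  apply W.toBasis.ext
  intro j
  rw [W.coe_toBasis]
  simp only [LinearMap.comp_apply, lin_apply_basis, LinearMap.map_smul, smul_smul]
  push_cast
  ring_nf

/-- algebra of quad -/
lemma quad_add (X Y : Matrix (Fin n) (Fin n) ℂ) (v : Esp n) :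
    quad (X + Y) v = quad X v + quad Y v := by
  simp only [quad, map_add, LinearMap.add_apply, inner_add_right, Complex.add_re]

lemma quad_conv {X : Matrix (Fin n) (Fin n) ℂ} (Y Z : Matrix (Fin n) (Fin n) ℂ)
    (hXYZ : X = Y + Z) (v : Esp n) : quad X v = quad Y v + quad Z v := by
  rw [hXYZ, quad_add]

/-- nonnegativity of quad given an eigрасaction with nonneg values -/
lemma quad_nonneg_of_act {X : Matrix (Fin n) (Fin n) ℂ} {W : OrthonormalBasis (Fin n) ℂ (Esp n)}
    {f : Fin n → ℝ} (hact : Matrix.toEuclideanLin X = lin W f) (hf : ∀ j, 0 ≤ f j) (v : Esp n) :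
    0 ≤ quad X v := by
  rw [quad_formula hact]
  exact Finset.sum_nonneg (fun j _ => mul_nonneg (hf j) (Complex.normSq_nonneg _))

lemma quad_le_of_act {X : Matrix (Fin n) (Fin n) ℂ} {W : OrthonormalBasis (Fin n) ℂ (Esp n)}
    {f : Fin n → ℝ} (hact : Matrix.toEuclideanLin X = lin W f) {t : ℝ} (hf : ∀ j, f j ≤ t)
    (v : Esp n) : quad X v ≤ t * nrm2 v := by
  rw [quad_formula hact, nrm2_formula W, Finset.mul_sum]
  exact Finset.sum_le_sum (fun j _ => mul_le_mul_of_nonneg_right (hf j) (Complex.normSq_nonneg _))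

/-- action transformation under basis reindexing by a permutation -/
lemma lin_reindex (W : OrthonormalBasis (Fin n) ℂ (Esp n)) (f : Fin n → ℝ)
    (σ : Equiv.Perm (Fin n)) :
    lin (W.reindex σ) (fun i => f (σ.symm i)) = lin W f := by
  apply W.toBasis.ext
  intro j
  rw [W.coe_toBasis]
  have h1 : (W.reindex σ) (σ j) = W j := by
    rw [OrthonormalBasis.reindex_apply, Equiv.symm_apply_apply]
  calc lin (W.reindex σ) (fun i => f (σ.symm i)) (W j)
      = lin (W.reindex σ) (fun i => f (σ.symm i)) ((W.reindex σ) (σ j)) := by rw [h1]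
    _ = (f (σ.symm (σ j)) : ℂ) • ((W.reindex σ) (σ j)) := lin_apply_basis _ _ _
    _ = (f j : ℂ) • W j := by rw [Equiv.symm_apply_apply, h1]
    _ = lin W f (W j) := (lin_apply_basis W f j).symm

def revP : Equiv.Perm (Fin n) := Function.Involutive.toPerm Fin.rev Fin.rev_involutive

lemma revP_apply (i : Fin n) : revP i = Fin.rev i := rfl

lemma revP_symm_apply (i : Fin n) : revP.symm i = Fin.rev i := rfl

lemma antitone_rev : Antitone (Fin.rev : Fin n → Fin n) :=
  fun _ _ h => Fin.rev_le_rev.mpr h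

/-- canonical spectral data of a Hermitian matrix -/
noncomputable def specData {X : Matrix (Fin n) (Fin n) ℂ} (hX : X.IsHermitian) : SpecData X where
  W := hX.eigenvectorBasis.reindex ((revP).trans (Tuple.sort hX.eigenvalues)).symm
  val := fun j => hX.eigenvalues (((revP).trans (Tuple.sort hX.eigenvalues)) j)
  anti := by
    have hmono : Monotone (hX.eigenvalues ∘ (Tuple.sort hX.eigenvalues)) :=
      Tuple.monotone_sort _
    intro i j hij
    exact hmono (antitone_rev hij)
  act := by
    apply (hX.eigenvectorBasis.reindex ((revP).trans (Tuple.sort hX.eigenvalues)).symm).toBasis.ext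
    intro j
    rw [OrthonormalBasis.coe_toBasis]
    rw [lin_apply_basis]
    rw [OrthonormalBasis.reindex_apply, Equiv.symm_symm]
    have h1 := hX.mulVec_eigenvectorBasis (((revP).trans (Tuple.sort hX.eigenvalues)) j)
    show (Matrix.toEuclideanLin X) (hX.eigenvectorBasis (((revP).trans (Tuple.sort hX.eigenvalues)) j))
        = ((hX.eigenvalues (((revP).trans (Tuple.sort hX.eigenvalues)) j) : ℂ))
          • (hX.eigenvectorBasis (((revP).trans (Tuple.sort hX.eigenvalues)) j))
    have h2 : ((Matrix.toEuclideanLin X) (hX.eigenvectorBasis (((revP).trans (Tuple.sort hX.eigenvalues)) j)) : Fin n → ℂ)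
        = X *ᵥ (hX.eigenvectorBasis (((revP).trans (Tuple.sort hX.eigenvalues)) j) : Fin n → ℂ) := rfl
    have h3 : (((hX.eigenvalues (((revP).trans (Tuple.sort hX.eigenvalues)) j) : ℂ))
          • (hX.eigenvectorBasis (((revP).trans (Tuple.sort hX.eigenvalues)) j)) : Fin n → ℂ)
        = (hX.eigenvalues (((revP).trans (Tuple.sort hX.eigenvalues)) j) : ℝ)
          • (hX.eigenvectorBasis (((revP).trans (Tuple.sort hX.eigenvalues)) j) : Fin n → ℂ) := by
      funext i
      simp [Pi.smul_apply, Complex.real_smul]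
    apply WithLp.ofLp_injective 2
    rw [h2, WithLp.ofLp_smul, h3]
    exact h1

lemma specData_val_perm {X : Matrix (Fin n) (Fin n) ℂ} (hX : X.IsHermitian) :
    (specData hX).val = hX.eigenvalues ∘ ((revP).trans (Tuple.sort hX.eigenvalues)) := rfl

/-- antitone rearrangements of a tuple are unique -/
lemma antitone_rearrange_unique {f : Fin n → ℝ} {σ τ : Equiv.Perm (Fin n)}
    (hσ : Antitone (f ∘ σ)) (hτ : Antitone (f ∘ τ)) : f ∘ σ = f ∘ τ := by
  have h1 : Monotone (f ∘ ((revP).trans σ)) := by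
    intro i j hij
    exact hσ (antitone_rev hij)
  have h2 : Monotone (f ∘ ((revP).trans τ)) := by
    intro i j hij
    exact hτ (antitone_rev hij)
  have h3 := Tuple.unique_monotone (f := f) (σ := (revP).trans σ) (τ := (revP).trans τ) h1 h2
  funext i
  have h4 := congrFun h3 (Fin.rev i)
  simpa [Function.comp, revP_apply, Fin.rev_rev] using h4

/-- identify any antitone rearrangement of eigenvalues with `specData.val` -/
lemma specData_val_eq {X : Matrix (Fin n) (Fin n) ℂ} (hX : X.IsHermitian)
    {x : Fin n → ℝ} {σ : Equiv.Perm (Fin n)} (hx : Antitone x)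
    (hxe : x = hX.eigenvalues ∘ σ) : (specData hX).val = x := by
  have h1 : Antitone (hX.eigenvalues ∘ ((revP).trans (Tuple.sort hX.eigenvalues))) :=
    (specData hX).anti
  have h2 : Antitone (hX.eigenvalues ∘ σ) := by rw [← hxe]; exact hx
  rw [specData_val_perm, hxe]
  exact antitone_rearrange_unique h1 h2

end

end Stmt10

namespace Stmt10

noncomputable section

variable {n : ℕ}

lemma lin_sub (W : OrthonormalBasis (Fin n) ℂ (Esp n)) (f g : Fin n → ℝ) :
    lin W (fun j => f j - g j) = lin W f - lin W g := by
  apply W.toBasis.ext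
  intro j
  rw [W.coe_toBasis]
  simp only [LinearMap.sub_apply, lin_apply_basis]
  push_cast
  rw [sub_smul]

lemma toEuclideanLin_one : Matrix.toEuclideanLin (1 : Matrix (Fin n) (Fin n) ℂ)
    = LinearMap.id := by
  have h0 : Matrix.toEuclideanLin (n := Fin n) (𝕜 := ℂ)
      = Matrix.toLin (PiLp.basisFun 2 ℂ (Fin n)) (PiLp.basisFun 2 ℂ (Fin n)) := rfl
  rw [h0, Matrix.toLin_one]

lemma toEuclideanLin_smul_one (β : ℝ) :
    Matrix.toEuclideanLin ((β : ℂ) • (1 : Matrix (Fin n) (Fin n) ℂ))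
      = (β : ℂ) • LinearMap.id := by
  rw [_root_.map_smul, toEuclideanLin_one]

lemma isHermitian_real_smul_one (β : ℝ) :
    ((β : ℂ) • (1 : Matrix (Fin n) (Fin n) ℂ)).IsHermitian := by
  unfold Matrix.IsHermitian
  rw [Matrix.conjTranspose_smul, Matrix.conjTranspose_one]
  congr 1
  simp [Complex.conj_ofReal]

lemma quad_nonneg_of_posSemidef {B : Matrix (Fin n) (Fin n) ℂ} (hB : B.PosSemidef)
    (v : Esp n) : 0 ≤ quad B v :=
  by have := hB.re_dotProduct_nonneg (v : Fin n → ℂ)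
     rw [quad, EuclideanSpace.inner_eq_star_dotProduct, dotProduct_comm]; exact this

lemma quad_pos_of_posDef {A : Matrix (Fin n) (Fin n) ℂ} (hA : A.PosDef) {v : Esp n}
    (hv : v ≠ 0) : 0 < quad A v :=
  by have := hA.re_dotProduct_pos (x := (v : Fin n → ℂ)) (fun h => hv (WithLp.ofLp_injective 2 h))
     rw [quad, EuclideanSpace.inner_eq_star_dotProduct, dotProduct_comm]; exact this

lemma quad_basis {X : Matrix (Fin n) (Fin n) ℂ} {W : OrthonormalBasis (Fin n) ℂ (Esp n)}
    {f : Fin n → ℝ} (hact : Matrix.toEuclideanLin X = lin W f) (j : Fin n) :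
    quad X (W j) = f j := by
  rw [quad_formula hact]
  rw [Finset.sum_eq_single j]
  · have h1 : cf W j (W j) = 1 := by
      have hn := W.orthonormal.1 j
      rw [cf, inner_self_eq_norm_sq_to_K, hn]
      simp
    rw [h1]
    simp
  · intro k _ hk
    rw [show cf W k (W j) = 0 from W.orthonormal.2 hk]
    simp
  · intro h; exact absurd (Finset.mem_univ j) h

lemma specval_pos {A : Matrix (Fin n) (Fin n) ℂ} (hA : A.PosDef) (D : SpecData A) (j : Fin n) :
    0 < D.val j := by
  rw [← quad_basis D.act j]
  exact quad_pos_of_posDef hA (D.W.orthonormal.ne_zero j)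

lemma specval_nonneg {B : Matrix (Fin n) (Fin n) ℂ} (hB : B.PosSemidef) (D : SpecData B)
    (j : Fin n) : 0 ≤ D.val j := by
  rw [← quad_basis D.act j]
  exact quad_nonneg_of_posSemidef hB _

lemma trace_inv_re {M : Matrix (Fin n) (Fin n) ℂ} (hM : M.PosDef) (D : SpecData M) :
    (Matrix.trace M⁻¹).re = ∑ j, (D.val j)⁻¹ := by
  have hzpos : ∀ j, 0 < D.val j := specval_pos hM D
  have hMN : M * mkMat D.W (fun j => (D.val j)⁻¹) = 1 := by
    apply Matrix.toEuclideanLin.injective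
    have h0 : Matrix.toEuclideanLin (n := Fin n) (𝕜 := ℂ)
        = Matrix.toLin (PiLp.basisFun 2 ℂ (Fin n)) (PiLp.basisFun 2 ℂ (Fin n)) := rfl
    rw [h0, Matrix.toLin_mul (M₂ := Esp n) _ (PiLp.basisFun 2 ℂ (Fin n)) _, Matrix.toLin_one]
    rw [← h0, D.act, mkMat_act, lin_comp]
    have : (fun j => D.val j * (D.val j)⁻¹) = (fun _ => (1:ℝ)) := by
      funext j; exact mul_inv_cancel₀ (ne_of_gt (hzpos j))
    rw [this, lin_one]
  rw [Matrix.inv_eq_right_inv hMN]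
  exact trace_re (mkMat_act _ _)

end

end Stmt10

namespace Stmt10

noncomputable section

variable {n : ℕ}

/-- Core Lidskii-type step: for any nonempty `P`,
`∑_{i∈P} (a_i + b_i) ≤ ∑_{top |P|} eigenvalues of A+B`. -/
lemma key_step (hn : 0 < n) {A B : Matrix (Fin n) (Fin n) ℂ}
    (hA : A.IsHermitian)
    (DA : SpecData A) (DM : SpecData (A + B))
    (WB : OrthonormalBasis (Fin n) ℂ (Esp n)) (b : Fin n → ℝ) (hb_mono : Monotone b)
    (hactB : Matrix.toEuclideanLin B = lin WB b)
    (P : Finset (Fin n)) (hP : P.Nonempty) :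
    ∑ i ∈ P, (DA.val i + b i) ≤ ∑ i ∈ pref n P.card, DM.val i := by
  classical
  set m := P.card with hm
  have hm1 : 1 ≤ m := Finset.card_pos.mpr hP
  have hmn : m ≤ n := card_le_n P
  set s := P.max' hP with hs
  set β := b s with hβ
  have hbele : ∀ i ∈ P, b i ≤ β := fun i hi => hb_mono (P.le_max' i hi)
  -- clip B above β
  set B₂ := mkMat WB (fun j => min (b j) β) with hB₂
  have hactB₂ : Matrix.toEuclideanLin B₂ = lin WB (fun j => min (b j) β) := mkMat_act _ _
  set B₁ := B - B₂ with hB₁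
  have hactB₁ : Matrix.toEuclideanLin B₁ = lin WB (fun j => b j - min (b j) β) := by
    rw [hB₁, map_sub, hactB, hactB₂, lin_sub]
  have hB₁nn : ∀ v : Esp n, 0 ≤ quad B₁ v :=
    quad_nonneg_of_act hactB₁ (fun j => sub_nonneg.mpr (min_le_left _ _))
  set Y := A + B₂ with hY
  have hYherm : Y.IsHermitian := hA.add (mkMat_isHermitian _ _)
  set DY := specData hYherm with hDY
  set y := DY.val with hy
  -- per-index comparison y ≤ z
  have hquadYM : ∀ v : Esp n, quad Y v ≤ quad (A + B) v + 0 * nrm2 v := by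
    intro v
    have hconv : quad (A + B) v = quad Y v + quad B₁ v :=
      quad_conv Y B₁ (by rw [hY, hB₁]; abel) v
    have h2 := hB₁nn v
    rw [hconv]
    ring_nf
    linarith
  have hI1 : ∀ k, y k ≤ DM.val k := by
    intro k
    have h := weyl_shift DY DM 0 hquadYM k
    linarith
  -- C := β - B₂ in B's basis
  set gA : Fin n → ℝ := fun i => β - min (b i) β with hgA
  have hgA_anti : Antitone gA := by
    intro i j hij
    have h1 : min (b i) β ≤ min (b j) β := min_le_min (hb_mono hij) le_rfl
    simp only [hgA]
    linarith
  set C := (β : ℂ) • (1 : Matrix (Fin n) (Fin n) ℂ) - B₂ with hC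
  have hactC : Matrix.toEuclideanLin C = lin WB gA := by
    rw [hC, map_sub, toEuclideanLin_smul_one, hactB₂,
      show (lin WB gA) = lin WB (fun j => (fun _ => β) j - (fun j => min (b j) β) j) from rfl,
      lin_sub, lin_const]
  set DC : SpecData C := ⟨WB, gA, hgA_anti, hactC⟩ with hDC
  -- clip of Y
  have hm1' : m - 1 < n := by omega
  set i₀ : Fin n := ⟨m - 1, hm1'⟩ with hi₀
  set τ := y i₀ - β with hτ
  set V₂ := mkMat DY.W (fun j => min (y j - β) τ) with hV₂
  have hactV₂ : Matrix.toEuclideanLin V₂ = lin DY.W (fun j => min (y j - β) τ) := mkMat_act _ _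
  set V₁ := Y - (β : ℂ) • 1 - V₂ with hV₁
  have hactV₁ : Matrix.toEuclideanLin V₁
      = lin DY.W (fun j => (y j - β) - min (y j - β) τ) := by
    rw [hV₁, map_sub, map_sub, toEuclideanLin_smul_one, DY.act, hactV₂,
      show (lin DY.W (fun j => (y j - β) - min (y j - β) τ))
        = lin DY.W (fun j => (fun j => y j - β) j - (fun j => min (y j - β) τ) j) from rfl,
      lin_sub,
      show (lin DY.W (fun j => y j - β))
        = lin DY.W (fun j => y j - (fun _ => β) j) from rfl,
      lin_sub, lin_const]
  have hV₁nn : ∀ v : Esp n, 0 ≤ quad V₁ v :=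
    quad_nonneg_of_act hactV₁ (fun j => sub_nonneg.mpr (min_le_left _ _))
  set H := C + V₂ with hH
  have hHherm : H.IsHermitian := by
    have hCh : C.IsHermitian := (isHermitian_real_smul_one β).sub (mkMat_isHermitian _ _)
    exact hCh.add (mkMat_isHermitian _ _)
  set DH := specData hHherm with hDH
  have hAHV : A = H + V₁ := by rw [hH, hC, hV₁, hY]; abel
  -- per-index h ≤ a
  have hquadHA : ∀ v : Esp n, quad H v ≤ quad A v + 0 * nrm2 v := by
    intro v
    have hconv : quad A v = quad H v + quad V₁ v := quad_conv H V₁ hAHV v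
    have h2 := hV₁nn v
    rw [hconv]
    ring_nf
    linarith
  have hI2 : ∀ k, DH.val k ≤ DA.val k := by
    intro k
    have h := weyl_shift DH DA 0 hquadHA k
    linarith
  -- per-index h ≤ g + τ
  have hquadHC : ∀ v : Esp n, quad H v ≤ quad C v + τ * nrm2 v := by
    intro v
    have hconv : quad H v = quad C v + quad V₂ v := quad_conv C V₂ hH v
    have hb2 : quad V₂ v ≤ τ * nrm2 v :=
      quad_le_of_act hactV₂ (fun j => min_le_right _ _) v
    linarith
  have hI4 : ∀ k, DH.val k ≤ gA k + τ := by
    intro k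
    exact weyl_shift DH DC τ hquadHC k
  -- traces
  have htraceA : (Matrix.trace A).re = ∑ j, DA.val j := trace_re DA.act
  have htraceH : (Matrix.trace H).re = ∑ j, DH.val j := trace_re DH.act
  have htraceV₁ : (Matrix.trace V₁).re = ∑ j, ((y j - β) - min (y j - β) τ) :=
    trace_re hactV₁
  have htraceSplit : ∑ j, DA.val j
      = ∑ j, DH.val j + ∑ j, ((y j - β) - min (y j - β) τ) := by
    rw [← htraceA, ← htraceH, ← htraceV₁, ← Complex.add_re, ← Matrix.trace_add, ← hAHV]
  -- simplify trace of V₁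
  have hterm : ∀ j, ((y j - β) - min (y j - β) τ) = y j - min (y j) (y i₀) := by
    intro j
    rcases le_total (y j) (y i₀) with h | h
    · rw [hτ, min_eq_left (by linarith : y j - β ≤ y i₀ - β), min_eq_left h]
      ring
    · rw [hτ, min_eq_right (by linarith : y i₀ - β ≤ y j - β), min_eq_right h]
      ring
  have hT2 : ∑ j, ((y j - β) - min (y j - β) τ)
      = (∑ j ∈ pref n m, y j) - m * y i₀ := by
    have hcongr : ∑ j, ((y j - β) - min (y j - β) τ)
        = ∑ j, (y j - min (y j) (y i₀)) :=
      Finset.sum_congr rfl (fun j _ => hterm j)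
    rw [hcongr,
      ← Finset.sum_filter_add_sum_filter_not Finset.univ (fun j : Fin n => (j : ℕ) < m)
        (fun j => y j - min (y j) (y i₀))]
    have hz : ∑ j ∈ Finset.univ.filter (fun j : Fin n => ¬ ((j : ℕ) < m)),
        (y j - min (y j) (y i₀)) = 0 := by
      apply Finset.sum_eq_zero
      intro j hj
      have hj' : ¬ ((j : ℕ) < m) := (Finset.mem_filter.mp hj).2
      have hij : i₀ ≤ j := by
        rw [hi₀]
        exact Fin.le_def.mpr (by simp only []; omega)
      have hyj : y j ≤ y i₀ := DY.anti hij
      rw [min_eq_left hyj]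
      ring
    have hp : ∑ j ∈ Finset.univ.filter (fun j : Fin n => ((j : ℕ) < m)),
        (y j - min (y j) (y i₀)) = (∑ j ∈ pref n m, y j) - m * y i₀ := by
      have hcg : ∀ j ∈ pref n m, y j - min (y j) (y i₀) = y j - y i₀ := by
        intro j hj
        have hj' : (j : ℕ) < m := mem_pref.mp hj
        have hij : j ≤ i₀ := by
          rw [hi₀]
          exact Fin.le_def.mpr (by simp only []; omega)
        have hyj : y i₀ ≤ y j := DY.anti hij
        rw [min_eq_right hyj]
      rw [show Finset.univ.filter (fun j : Fin n => ((j : ℕ) < m)) = pref n m from rfl,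
        Finset.sum_congr rfl hcg, Finset.sum_sub_distrib, Finset.sum_const,
        pref_card hmn, nsmul_eq_mul]
    rw [hz, hp, add_zero]
  -- capture over P
  have hcap : ∑ i ∈ P, (DA.val i - DH.val i) ≤ ∑ j, (DA.val j - DH.val j) :=
    Finset.sum_le_sum_of_subset_of_nonneg (Finset.subset_univ P)
      (fun j _ _ => sub_nonneg.mpr (hI2 j))
  rw [Finset.sum_sub_distrib, Finset.sum_sub_distrib] at hcap
  have hPH : ∑ i ∈ P, DH.val i ≤ ∑ i ∈ P, gA i + m * τ := by
    calc ∑ i ∈ P, DH.val i ≤ ∑ i ∈ P, (gA i + τ) := Finset.sum_le_sum (fun i _ => hI4 i)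
      _ = ∑ i ∈ P, gA i + m * τ := by
          rw [Finset.sum_add_distrib, Finset.sum_const, ← hm, nsmul_eq_mul]
  have hgsum : ∑ i ∈ P, gA i = m * β - ∑ i ∈ P, b i := by
    have hcg : ∀ i ∈ P, gA i = β - b i := by
      intro i hi
      simp only [hgA]
      rw [min_eq_left (hbele i hi)]
    rw [Finset.sum_congr rfl hcg, Finset.sum_sub_distrib, Finset.sum_const, ← hm, nsmul_eq_mul]
  have hyi : (m : ℝ) * τ = m * y i₀ - m * β := by rw [hτ]; ring
  have hmain : ∑ i ∈ P, DA.val i + ∑ i ∈ P, b i ≤ ∑ j ∈ pref n m, y j := by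
    linarith
  have hy_pref : ∑ j ∈ pref n m, y j ≤ ∑ j ∈ pref n m, DM.val j :=
    Finset.sum_le_sum (fun j _ => hI1 j)
  calc ∑ i ∈ P, (DA.val i + b i)
      = ∑ i ∈ P, DA.val i + ∑ i ∈ P, b i := Finset.sum_add_distrib
    _ ≤ ∑ j ∈ pref n m, y j := hmain
    _ ≤ ∑ j ∈ pref n m, DM.val j := hy_pref

end

end Stmt10

/-- **Trace-of-inverse eigenvalue pairing bound.** For `A` Hermitian positive definite
and `B` Hermitian positive semidefinite, with `a` the eigenvalues of `A` sorted in
decreasing order and `b` the eigenvalues of `B` sorted in increasing order, `A + B` is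
positive definite and `Re Tr((A + B)⁻¹) ≥ ∑ i 1/(a_i + b_i)`. -/
theorem stmt10 {n : ℕ} (hn : 0 < n) (A B : Matrix (Fin n) (Fin n) ℂ)
    (hA : A.PosDef) (hB : B.PosSemidef)
    (a b : Fin n → ℝ) (ha_anti : Antitone a) (hb_mono : Monotone b)
    (σA σB : Equiv.Perm (Fin n))
    (ha_eig : a = hA.isHermitian.eigenvalues ∘ σA)
    (hb_eig : b = hB.isHermitian.eigenvalues ∘ σB) :
    (A + B).PosDef ∧ ∑ i, 1 / (a i + b i) ≤ (Matrix.trace (A + B)⁻¹).re := by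
  classical
  have hM : (A + B).PosDef := hA.add_posSemidef hB
  refine ⟨hM, ?_⟩
  set DA := Stmt10.specData hA.isHermitian with hDAdef
  have hDAval : DA.val = a := Stmt10.specData_val_eq _ ha_anti ha_eig
  set DB := Stmt10.specData hB.isHermitian with hDBdef
  have hbrev_anti : Antitone (b ∘ (Stmt10.revP : Equiv.Perm (Fin n))) := by
    intro i j hij
    exact hb_mono (Stmt10.antitone_rev hij)
  have hDBval : DB.val = b ∘ Stmt10.revP := by
    apply Stmt10.specData_val_eq _ hbrev_anti (σ := (Stmt10.revP (n := n)).trans σB)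
    funext i
    rw [hb_eig]
    rfl
  set WB := DB.W.reindex Stmt10.revP with hWBdef
  have hactB : Matrix.toEuclideanLin B = Stmt10.lin WB b := by
    have hrw : (fun i => DB.val ((Stmt10.revP (n := n)).symm i)) = b := by
      funext i
      rw [hDBval]
      show b (Stmt10.revP ((Stmt10.revP (n := n)).symm i)) = b i
      rw [Equiv.apply_symm_apply]
    have h0 := Stmt10.lin_reindex DB.W DB.val Stmt10.revP
    rw [hrw] at h0
    rw [hWBdef, h0]
    exact DB.act
  -- so toEuclideanLin B = lin DB.W DB.val = lin WB (fun i => DB.val (revP.symm i)) = lin WB b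
  set DM := Stmt10.specData hM.isHermitian with hDMdef
  set z := DM.val with hzdef
  have hz_pos : ∀ j, 0 < z j := Stmt10.specval_pos hM DM
  have ha_pos : ∀ i, 0 < a i := by
    intro i
    rw [← hDAval]
    exact Stmt10.specval_pos hA DA i
  have hb_nonneg : ∀ i, 0 ≤ b i := by
    intro i
    have h1 := Stmt10.specval_nonneg hB DB (Stmt10.revP i)
    rw [hDBval] at h1
    simpa [Stmt10.revP_apply, Fin.rev_rev] using h1
  set c : Fin n → ℝ := fun i => a i + b i with hc
  set ρc := (Stmt10.revP (n := n)).trans (Tuple.sort c) with hρc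
  set d : Fin n → ℝ := fun i => c (ρc i) with hd
  have hd_anti : Antitone d := by
    have hmono : Monotone (c ∘ Tuple.sort c) := Tuple.monotone_sort c
    intro i j hij
    exact hmono (Stmt10.antitone_rev hij)
  have hd_pos : ∀ i, 0 < d i := by
    intro i
    have h1 := ha_pos (ρc i)
    have h2 := hb_nonneg (ρc i)
    simp only [hd, hc]
    linarith
  have hpref : ∀ m, m ≤ n →
      ∑ i ∈ Stmt10.pref n m, d i ≤ ∑ i ∈ Stmt10.pref n m, z i := by
    intro m hmn
    rcases Nat.eq_zero_or_pos m with rfl | hm1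
    · simp [Stmt10.pref]
    · set P := (Stmt10.pref n m).image ρc with hPdef
      have hPcard : P.card = m := by
        rw [hPdef, Finset.card_image_of_injective _ ρc.injective, Stmt10.pref_card hmn]
      have hPne : P.Nonempty := by
        rw [← Finset.card_pos, hPcard]
        exact hm1
      have hsum : ∑ i ∈ Stmt10.pref n m, d i = ∑ i ∈ P, c i := by
        rw [hPdef, Finset.sum_image (fun x _ y _ h => ρc.injective h)]
      have hkey := Stmt10.key_step hn hA.isHermitian DA DM WB b hb_mono hactB P hPne
      rw [hPcard, hDAval] at hkey
      rw [hsum]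
      exact hkey
  have htotA : (Matrix.trace A).re = ∑ i, a i := by
    rw [Stmt10.trace_re DA.act, hDAval]
  have htotB : (Matrix.trace B).re = ∑ i, b i := Stmt10.trace_re hactB
  have htotM : (Matrix.trace (A + B)).re = ∑ i, z i := Stmt10.trace_re DM.act
  have htot : ∑ i, d i = ∑ i, z i := by
    have h1 : ∑ i, d i = ∑ i, c i := Equiv.sum_comp ρc c
    have h2 : ∑ i, c i = ∑ i, a i + ∑ i, b i := by
      rw [hc, Finset.sum_add_distrib]
    have h3 : (Matrix.trace (A + B)).re = (Matrix.trace A).re + (Matrix.trace B).re := by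
      rw [Matrix.trace_add, Complex.add_re]
    rw [h1, h2, ← htotA, ← htotB, ← h3, htotM]
  have habel := Stmt10.abel_conclusion hn z d hd_anti hd_pos hz_pos hpref htot
  have hinv : (Matrix.trace (A + B)⁻¹).re = ∑ j, (z j)⁻¹ := Stmt10.trace_inv_re hM DM
  have hfinal1 : ∑ i, 1 / (a i + b i) = ∑ i, 1 / d i := by
    rw [show (∑ i, 1 / d i) = ∑ i, (fun i => 1 / c i) (ρc i) from rfl,
      Equiv.sum_comp ρc (fun i => 1 / c i)]
  rw [hfinal1, hinv]
  calc ∑ i, 1 / d i ≤ ∑ i, 1 / z i := habel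
    _ = ∑ j, (z j)⁻¹ := by simp [one_div]
end
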